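/- In the corona C3∘P3, the effective resistance between the two end vertices of the same copy of P3 equals 1, and the effective resistance between an end vertex and the middle vertex of the same copy of P3 equals 5/8. -/

import Mathlib

open Matrix Kronecker

/-- The corona `G1 ∘ G2`: one copy of `G1` and `n1` copies of `G2`, with the `i`-th vertex
of `G1` joined to every vertex in the `i`-th copy of `G2`. The copy of vertex `w` of `G2`
belonging to the `i`-th copy is encoded as `Sum.inr (w, i)`, so the second block of vertices
is ordered as `W_1, ..., W_{n2}` where `W_j` collects the `j`-th vertex of all copies. -/
def corona {V1 V2 : Type*} (G1 : SimpleGraph V1) (G2 : SimpleGraph V2) :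
    SimpleGraph (V1 ⊕ V2 × V1) where
  Adj x y :=
    match x, y with
    | .inl i, .inl j => G1.Adj i j
    | .inl i, .inr (_, k) => i = k
    | .inr (_, k), .inl i => k = i
    | .inr (w, i), .inr (w', j) => i = j ∧ G2.Adj w w'
  symm := ⟨by
    rintro (i | ⟨w, i⟩) (j | ⟨w', j⟩) h
    · exact h.symm
    · exact h.symm
    · exact h.symm
    · exact ⟨h.1.symm, h.2.symm⟩⟩
  loopless := ⟨by
    rintro (i | ⟨w, i⟩) h
    · exact G1.irrefl h
    · exact G2.irrefl h.2⟩

noncomputable instance {V1 V2 : Type*} (G1 : SimpleGraph V1) (G2 : SimpleGraph V2) :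
    DecidableRel (corona G1 G2).Adj := Classical.decRel _

/-- The Laplacian of the corona `C3 ∘ P3`. -/
noncomputable def lapC3P3 :
    Matrix (Fin 3 ⊕ Fin 3 × Fin 3) (Fin 3 ⊕ Fin 3 × Fin 3) ℝ :=
  (corona (SimpleGraph.cycleGraph 3) (SimpleGraph.pathGraph 3)).lapMatrix ℝ


/-- Abbreviation for the vertex type of `C3 ∘ P3`. -/
abbrev Vc := Fin 3 ⊕ Fin 3 × Fin 3

lemma corona_adj_iff (x y : Vc) :
    (corona (SimpleGraph.cycleGraph 3) (SimpleGraph.pathGraph 3)).Adj x y ↔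
    (match x, y with
    | .inl i, .inl j => i ≠ j
    | .inl i, .inr (_, k) => i = k
    | .inr (_, k), .inl i => k = i
    | .inr (w, i), .inr (w', j) =>
        i = j ∧ (w.val + 1 = w'.val ∨ w'.val + 1 = w.val)) := by
  rcases x with i | ⟨w, i⟩ <;> rcases y with j | ⟨w', j⟩
  · have : (corona (SimpleGraph.cycleGraph 3) (SimpleGraph.pathGraph 3)).Adj
        (Sum.inl i) (Sum.inl j) ↔ (SimpleGraph.cycleGraph 3).Adj i j := Iff.rfl
    rw [this, SimpleGraph.cycleGraph_three_eq_top, SimpleGraph.top_adj]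
  · exact Iff.rfl
  · exact Iff.rfl
  · exact and_congr Iff.rfl SimpleGraph.pathGraph_adj

/-- Laplacian of `P3`. -/
noncomputable def P3L : Matrix (Fin 3) (Fin 3) ℝ := !![2,-1,0;-1,3,-1;0,-1,2]

/-- Explicit form of the Laplacian of `C3 ∘ P3`. -/
noncomputable def L0 : Matrix Vc Vc ℝ := fun x y => match x, y with
 | .inl i, .inl j => if i = j then 5 else -1
 | .inl i, .inr (_, k) => if i = k then -1 else 0
 | .inr (_, k), .inl i => if k = i then -1 else 0
 | .inr (w, i), .inr (w', j) => if i = j then P3L w w' else 0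

set_option maxHeartbeats 1000000 in
lemma deg_eval (v : Vc) :
    (corona (SimpleGraph.cycleGraph 3) (SimpleGraph.pathGraph 3)).degree v =
    (match v with | .inl _ => 5 | .inr (w, _) => if w = 1 then 3 else 2) := by
  rw [SimpleGraph.degree, SimpleGraph.neighborFinset_eq_filter, Finset.card_filter]
  rcases v with i | ⟨w, i⟩ <;> [skip; fin_cases w] <;> fin_cases i <;>
    simp (config := {decide := true}) [-Finset.sum_boole, corona_adj_iff,
      Fintype.sum_sum_type, Fintype.sum_prod_type, Fin.sum_univ_three]

set_option maxHeartbeats 1000000 in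
lemma lapEq : lapC3P3 = L0 := by
  ext x y
  rw [lapC3P3, SimpleGraph.lapMatrix, Matrix.sub_apply, SimpleGraph.degMatrix,
    Matrix.diagonal_apply, SimpleGraph.adjMatrix_apply]
  rcases x with i | ⟨w, i⟩ <;> rcases y with j | ⟨w', j⟩
  · by_cases h : i = j <;>
      simp (config := {decide := true}) [h, deg_eval, corona_adj_iff, L0]
  · by_cases h : i = j <;>
      simp (config := {decide := true}) [h, deg_eval, corona_adj_iff, L0]
  · by_cases h : i = j <;>
      simp (config := {decide := true}) [h, deg_eval, corona_adj_iff, L0]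
  · by_cases h : i = j <;> fin_cases w <;> fin_cases w' <;>
      simp (config := {decide := true}) [h, deg_eval, corona_adj_iff, L0, P3L, Fin.ext_iff]

/-- The inner block of `144` times the Moore-Penrose inverse. -/
noncomputable def B3 : Matrix (Fin 3) (Fin 3) ℝ := !![107,53,35;53,89,53;35,53,107]

/-- The explicit Moore-Penrose inverse of the Laplacian of `C3 ∘ P3`. -/
noncomputable def M0 : Matrix Vc Vc ℝ := fun x y => (match x, y with
 | .inl i, .inl j => if i = j then 41 else -7
 | .inl i, .inr (_, k) => if i = k then 29 else -19
 | .inr (_, k), .inl i => if k = i then 29 else -19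
 | .inr (w, i), .inr (w', j) => if i = j then B3 w w' else -31) / 144

/-- The all-ones matrix. -/
noncomputable def Jm : Matrix Vc Vc ℝ := Matrix.of fun _ _ => 1

set_option maxHeartbeats 4000000 in
lemma N2 : L0 * M0 = 1 - (12⁻¹ : ℝ) • Jm := by
  ext x y
  rw [Matrix.mul_apply]
  rcases x with i | ⟨w, i⟩ <;> rcases y with j | ⟨w', j⟩ <;>
    fin_cases i <;> fin_cases j <;> (try fin_cases w) <;> (try fin_cases w') <;>
    simp (config := {decide := true}) [Fintype.sum_sum_type, Fintype.sum_prod_type,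
      Fin.sum_univ_three, L0, M0, B3, P3L, Jm, Matrix.one_apply] <;>
    norm_num

set_option maxHeartbeats 1000000 in
lemma N3 : Jm * L0 = 0 := by
  ext x y
  rw [Matrix.mul_apply]
  rcases y with j | ⟨w', j⟩ <;> (try fin_cases w') <;> fin_cases j <;>
    simp (config := {decide := true}) [Fintype.sum_sum_type, Fintype.sum_prod_type,
      Fin.sum_univ_three, L0, P3L, Jm] <;> norm_num

set_option maxHeartbeats 1000000 in
lemma N4 : Jm * M0 = 0 := by
  ext x y
  rw [Matrix.mul_apply]
  rcases y with j | ⟨w', j⟩ <;> (try fin_cases w') <;> fin_cases j <;>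
    simp (config := {decide := true}) [Fintype.sum_sum_type, Fintype.sum_prod_type,
      Fin.sum_univ_three, M0, B3, Jm] <;> norm_num

set_option maxHeartbeats 1000000 in
lemma N5 : M0ᵀ = M0 := by
  ext x y
  rw [Matrix.transpose_apply]
  rcases x with i | ⟨w, i⟩ <;> rcases y with j | ⟨w', j⟩
  · by_cases h : i = j <;> simp [h, M0, eq_comm]
  · by_cases h : i = j <;> simp [h, M0, eq_comm]
  · by_cases h : i = j <;> simp [h, M0, eq_comm]
  · by_cases h : i = j <;> fin_cases w <;> fin_cases w' <;>
      simp (config := {decide := true}) [h, M0, B3, eq_comm, Fin.ext_iff]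

lemma hLsymm : L0ᵀ = L0 := by
  rw [← lapEq]
  exact SimpleGraph.isSymm_lapMatrix (R := ℝ) (G := corona (SimpleGraph.cycleGraph 3) (SimpleGraph.pathGraph 3))

lemma hJsymm : Jmᵀ = Jm := rfl

lemma hPsymm : (1 - (12⁻¹ : ℝ) • Jm)ᵀ = 1 - (12⁻¹ : ℝ) • Jm := by
  rw [Matrix.transpose_sub, Matrix.transpose_one, Matrix.transpose_smul, hJsymm]

lemma hML : M0 * L0 = 1 - (12⁻¹ : ℝ) • Jm := by
  rw [← N5, ← hLsymm, ← Matrix.transpose_mul, N2, hPsymm]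

lemma hLJ : L0 * Jm = 0 := by
  have : (Jm * L0)ᵀ = L0ᵀ * Jmᵀ := Matrix.transpose_mul _ _
  rw [N3, hLsymm, hJsymm] at this
  rw [← this, Matrix.transpose_zero]

/-- In `C3 ∘ P3`, inside one copy of `P3` (vertices `0 - 1 - 2`): the effective resistance
between the two end vertices is `1`, and between an end vertex and the middle vertex it
is `5/8`. -/
theorem resistance_C3P3_within_copy
    (H : Matrix (Fin 3 ⊕ Fin 3 × Fin 3) (Fin 3 ⊕ Fin 3 × Fin 3) ℝ)
    (hH1 : lapC3P3 * H * lapC3P3 = lapC3P3)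
    (hH2 : H * lapC3P3 * H = H)
    (hH3 : (lapC3P3 * H)ᵀ = lapC3P3 * H)
    (hH4 : (H * lapC3P3)ᵀ = H * lapC3P3)
    (i : Fin 3) :
    (H (Sum.inr (0, i)) (Sum.inr (0, i)) + H (Sum.inr (2, i)) (Sum.inr (2, i)) -
      2 * H (Sum.inr (0, i)) (Sum.inr (2, i)) = 1) ∧
    (H (Sum.inr (0, i)) (Sum.inr (0, i)) + H (Sum.inr (1, i)) (Sum.inr (1, i)) -
      2 * H (Sum.inr (0, i)) (Sum.inr (1, i)) = 5 / 8) ∧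
    (H (Sum.inr (2, i)) (Sum.inr (2, i)) + H (Sum.inr (1, i)) (Sum.inr (1, i)) -
      2 * H (Sum.inr (2, i)) (Sum.inr (1, i)) = 5 / 8) := by
  rw [lapEq] at hH1 hH2 hH3 hH4
  -- L0 * H equals the projection 1 - J/12
  have hLHJ : (L0 * H) * Jm = 0 := by
    have h1 : ((L0 * H) * Jm)ᵀ = Jmᵀ * (L0 * H)ᵀ := Matrix.transpose_mul _ _
    rw [hH3, hJsymm, ← Matrix.mul_assoc, N3, Matrix.zero_mul] at h1
    calc (L0 * H) * Jm = (((L0 * H) * Jm)ᵀ)ᵀ := by rw [Matrix.transpose_transpose]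
    _ = 0 := by rw [h1, Matrix.transpose_zero]
  have hLH : L0 * H = 1 - (12⁻¹ : ℝ) • Jm := by
    have key : (L0 * H) * (L0 * M0) = L0 * M0 := by
      rw [← Matrix.mul_assoc, hH1]
    rw [N2, Matrix.mul_sub, Matrix.mul_one, Matrix.mul_smul, hLHJ, smul_zero, sub_zero] at key
    exact key
  have hHLJ : (H * L0) * Jm = 0 := by
    rw [Matrix.mul_assoc, hLJ, Matrix.mul_zero]
  have hJHL : Jm * (H * L0) = 0 := by
    have h1 : ((H * L0) * Jm)ᵀ = Jmᵀ * (H * L0)ᵀ := Matrix.transpose_mul _ _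
    rw [hHLJ, hH4, hJsymm, Matrix.transpose_zero] at h1
    exact h1.symm
  have hHL : H * L0 = 1 - (12⁻¹ : ℝ) • Jm := by
    have key : (M0 * L0) * (H * L0) = M0 * L0 := by
      rw [Matrix.mul_assoc M0 L0 (H * L0), ← Matrix.mul_assoc L0 H L0, hH1]
    rw [hML, Matrix.sub_mul, Matrix.one_mul, Matrix.smul_mul, hJHL, smul_zero, sub_zero] at key
    exact key
  have hHM : H = M0 := by
    calc H = H * L0 * H := hH2.symm
    _ = H * (L0 * H) := Matrix.mul_assoc _ _ _
    _ = H * (L0 * M0) := by rw [hLH, N2]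
    _ = (H * L0) * M0 := (Matrix.mul_assoc _ _ _).symm
    _ = (1 - (12⁻¹ : ℝ) • Jm) * M0 := by rw [hHL]
    _ = M0 - (12⁻¹ : ℝ) • (Jm * M0) := by
        rw [Matrix.sub_mul, Matrix.one_mul, Matrix.smul_mul]
    _ = M0 := by rw [N4, smul_zero, sub_zero]
  subst hHM
  refine ⟨?_, ?_, ?_⟩ <;>
    simp (config := {decide := true}) [M0, B3] <;> norm_num
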